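/- Let Λ be a row-finite k-graph with no sources and let E be its diagonal 1-graph (edges are paths of degree p = (1,…,1)). Then the map i : Λ^∞ → E^∞ determined by α(i(x)(j,l)) = x(jp, lp) is a bijection, and its inverse i⁻¹ : E^∞ → Λ^∞ is continuous. -/

import Mathlib

/-- A `k`-graph: a small category `(V, E, r, s, comp, vId)` together with a degree functor
`deg : E → ℕᵏ` satisfying the unique factorization property.  `comp l m h` is the
composition `lm` (defined when `s l = r m`), with `r (lm) = r l`, `s (lm) = s m`. -/
structure KGraph (k : ℕ) where
  V : Type
  E : Type
  r : E → V
  s : E → V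
  comp : (l m : E) → s l = r m → E
  vId : V → E
  deg : E → Fin k → ℕ
  r_comp : ∀ (l m : E) (h : s l = r m), r (comp l m h) = r l
  s_comp : ∀ (l m : E) (h : s l = r m), s (comp l m h) = s m
  deg_comp : ∀ (l m : E) (h : s l = r m), deg (comp l m h) = deg l + deg m
  r_vId : ∀ v, r (vId v) = v
  s_vId : ∀ v, s (vId v) = v
  deg_vId : ∀ v, deg (vId v) = 0
  id_comp : ∀ (l : E) (h : s (vId (r l)) = r l), comp (vId (r l)) l h = l
  comp_id : ∀ (l : E) (h : s l = r (vId (s l))), comp l (vId (s l)) h = l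
  comp_assoc : ∀ (l m n : E) (h1 : s l = r m) (h2 : s m = r n)
    (h3 : s (comp l m h1) = r n) (h4 : s l = r (comp m n h2)),
    comp (comp l m h1) n h3 = comp l (comp m n h2) h4
  factor : ∀ (l : E) (p q : Fin k → ℕ), deg l = p + q →
    ∃! mn : E × E, ∃ h : s mn.1 = r mn.2,
      comp mn.1 mn.2 h = l ∧ deg mn.1 = p ∧ deg mn.2 = q

namespace KGraph

variable {k : ℕ} (G : KGraph k)

/-- `Λ` is row-finite: each `vΛⁿ` is finite. -/
def RowFinite : Prop := ∀ (v : G.V) (n : Fin k → ℕ), {l : G.E | G.r l = v ∧ G.deg l = n}.Finite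

/-- `Λ` has no sources: each `vΛⁿ` is nonempty. -/
def NoSources : Prop := ∀ (v : G.V) (n : Fin k → ℕ), ∃ l : G.E, G.r l = v ∧ G.deg l = n

/-- An infinite path in a `k`-graph, recorded by its initial segments `seg n = x(0,n)`:
`deg (seg n) = n` and `seg n` extends to `seg (n + m)`. -/
structure InfPath where
  seg : (Fin k → ℕ) → G.E
  deg_seg : ∀ n, G.deg (seg n) = n
  compat : ∀ n m : Fin k → ℕ, ∃ (μ : G.E) (h : G.s (seg n) = G.r μ),
    G.comp (seg n) μ h = seg (n + m)

/-- The cylinder-set topology on the infinite path space `Λ^∞`, generated by the sets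
`Z(λ) = {x : x(0, d λ) = λ}`. -/
def infPathTop : TopologicalSpace G.InfPath :=
  TopologicalSpace.generateFrom {S | ∃ l : G.E, S = {x : G.InfPath | x.seg (G.deg l) = l}}

/-- An infinite path of the diagonal `1`-graph `E` of `Λ`: a composable sequence of
edges, i.e. of morphisms of degree `p = (1,…,1)`. -/
structure DiagSeq where
  edge : ℕ → G.E
  deg_edge : ∀ n, G.deg (edge n) = fun _ => 1
  comp_edge : ∀ n, G.s (edge n) = G.r (edge (n + 1))

/-- The cylinder-set topology on the infinite path space `E^∞` of the diagonal `1`-graph,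
generated by the sets of paths with a prescribed initial segment of edges. -/
def diagTop : TopologicalSpace G.DiagSeq :=
  TopologicalSpace.generateFrom
    {S | ∃ (n : ℕ) (w : ℕ → G.E), S = {z : G.DiagSeq | ∀ i < n, z.edge i = w i}}

/-- `Prepend l x y` expresses that `y = λ x` in `Λ^∞`:
`y(0, d(λ)+n) = λ · x(0,n)` for all `n`. -/
def Prepend (l : G.E) (x y : G.InfPath) : Prop :=
  ∀ n : Fin k → ℕ, ∃ h : G.s l = G.r (x.seg n),
    G.comp l (x.seg n) h = y.seg (G.deg l + n)

end KGraph

namespace KGraph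

variable {k : ℕ} {G : KGraph k}

theorem comp_congr {a a' b b' : G.E} (ha : a = a') (hb : b = b')
    (h : G.s a = G.r b) (h' : G.s a' = G.r b') :
    G.comp a b h = G.comp a' b' h' := by subst ha; subst hb; rfl

/-- Uniqueness of factorization: cancellation. -/
theorem comp_cancel {a b a' b' : G.E} (h : G.s a = G.r b) (h' : G.s a' = G.r b')
    (hd : G.deg a = G.deg a') (he : G.comp a b h = G.comp a' b' h') :
    a = a' ∧ b = b' := by
  have hdb : G.deg b = G.deg b' := by
    have h1 := G.deg_comp a b h
    have h2 := G.deg_comp a' b' h'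
    rw [← he, h1, hd] at h2
    exact add_left_cancel h2
  obtain ⟨mn, -, huniq⟩ := G.factor (G.comp a b h) (G.deg a) (G.deg b)
    (G.deg_comp a b h)
  have e1 : (a, b) = mn := huniq (a, b) ⟨h, rfl, rfl, rfl⟩
  have e2 : (a', b') = mn := huniq (a', b') ⟨h', he.symm, hd.symm, hdb.symm⟩
  have := e1.trans e2.symm
  exact ⟨congrArg Prod.fst this, congrArg Prod.snd this⟩

theorem eq_vId_of_deg_zero {e : G.E} (hd : G.deg e = 0) : e = G.vId (G.r e) := by
  obtain ⟨mn, -, huniq⟩ := G.factor e 0 0 (by rw [hd, add_zero])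
  have h1 : G.s (G.vId (G.r e)) = G.r e := G.s_vId _
  have e1 : (G.vId (G.r e), e) = mn :=
    huniq _ ⟨h1, G.id_comp e h1, G.deg_vId _, hd⟩
  have h2 : G.s e = G.r (G.vId (G.s e)) := (G.r_vId _).symm
  have e2 : (e, G.vId (G.s e)) = mn :=
    huniq _ ⟨h2, G.comp_id e h2, hd, G.deg_vId _⟩
  exact (congrArg Prod.fst (e2.trans e1.symm))

/-! ### The forward map `Λ^∞ → E^∞` -/

noncomputable def fwd (x : G.InfPath) : G.DiagSeq where
  edge n := (x.compat (fun _ => n) (fun _ => 1)).choose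
  deg_edge n := by
    obtain ⟨h, hc⟩ := (x.compat (fun _ => n) (fun _ => 1)).choose_spec
    have hdc := G.deg_comp _ _ h
    rw [hc, x.deg_seg, x.deg_seg] at hdc
    funext i
    have := congrFun hdc i
    simpa using this.symm
  comp_edge n := by
    obtain ⟨h, hc⟩ := (x.compat (fun _ => n) (fun _ => 1)).choose_spec
    obtain ⟨h', hc'⟩ := (x.compat (fun _ => n + 1) (fun _ => 1)).choose_spec
    have : G.s (G.comp _ _ h) = G.s ((x.compat (fun _ => n) (fun _ => 1)).choose) :=
      G.s_comp _ _ h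
    rw [hc] at this
    exact this.symm.trans h'

theorem fwd_spec (x : G.InfPath) (n : ℕ) :
    ∃ h : G.s (x.seg (fun _ => n)) = G.r ((fwd x).edge n),
      G.comp (x.seg (fun _ => n)) ((fwd x).edge n) h = x.seg (fun _ => n + 1) :=
  (x.compat (fun _ => n) (fun _ => 1)).choose_spec

/-! ### The backward map `E^∞ → Λ^∞` -/

noncomputable def pathToAux (z : G.DiagSeq) :
    (n : ℕ) → {e : G.E // G.s e = G.r (z.edge n)}
  | 0 => ⟨G.vId (G.r (z.edge 0)), G.s_vId _⟩
  | n + 1 => ⟨G.comp (pathToAux z n).1 (z.edge n) (pathToAux z n).2,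
      by rw [G.s_comp]; exact z.comp_edge n⟩

noncomputable def pathTo (z : G.DiagSeq) (n : ℕ) : G.E := (pathToAux z n).1

theorem pathTo_s (z : G.DiagSeq) (n : ℕ) : G.s (pathTo z n) = G.r (z.edge n) :=
  (pathToAux z n).2

theorem pathTo_succ (z : G.DiagSeq) (n : ℕ) :
    pathTo z (n + 1) = G.comp (pathTo z n) (z.edge n) (pathTo_s z n) := rfl

theorem deg_pathTo (z : G.DiagSeq) (n : ℕ) : G.deg (pathTo z n) = fun _ => n := by
  induction n with
  | zero =>
    show G.deg (G.vId (G.r (z.edge 0))) = fun _ => 0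
    exact G.deg_vId _
  | succ n ih =>
    rw [pathTo_succ, G.deg_comp, ih, z.deg_edge]
    rfl

theorem pathTo_add (z : G.DiagSeq) (n t : ℕ) :
    ∃ (ρ : G.E) (h : G.s (pathTo z n) = G.r ρ),
      G.comp (pathTo z n) ρ h = pathTo z (n + t) := by
  induction t with
  | zero =>
    refine ⟨G.vId (G.s (pathTo z n)), (G.r_vId _).symm, ?_⟩
    exact G.comp_id _ _
  | succ t ih =>
    obtain ⟨ρ, h, hc⟩ := ih
    have hs : G.s ρ = G.r (z.edge (n + t)) := by
      have := G.s_comp _ _ h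
      rw [hc, pathTo_s] at this
      exact this.symm
    refine ⟨G.comp ρ (z.edge (n + t)) hs, by rw [G.r_comp]; exact h, ?_⟩
    rw [← G.comp_assoc _ _ _ h hs (by rw [hc]; exact pathTo_s z (n + t))]
    rw [show n + (t + 1) = n + t + 1 from rfl, pathTo_succ]
    exact comp_congr hc rfl _ _

/-- Upper bound used to pick a long enough diagonal path. -/
def bnd (n : Fin k → ℕ) : ℕ := Finset.univ.sup n

theorem le_bnd (n : Fin k → ℕ) (i : Fin k) : n i ≤ bnd n :=
  Finset.le_sup (Finset.mem_univ i)

theorem deg_pathTo_bnd (z : G.DiagSeq) (n : Fin k → ℕ) :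
    G.deg (pathTo z (bnd n)) = n + fun i => bnd n - n i := by
  rw [deg_pathTo]; funext i
  exact (Nat.add_sub_cancel' (le_bnd n i)).symm

noncomputable def segOf (z : G.DiagSeq) (n : Fin k → ℕ) : G.E :=
  (G.factor (pathTo z (bnd n)) n (fun i => bnd n - n i) (deg_pathTo_bnd z n)).choose.1

theorem segOf_spec (z : G.DiagSeq) (n : Fin k → ℕ) :
    (∃ (ν : G.E) (h : G.s (segOf z n) = G.r ν),
      G.comp (segOf z n) ν h = pathTo z (bnd n)) ∧ G.deg (segOf z n) = n := by
  obtain ⟨h, hc, hd, hd'⟩ :=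
    (G.factor (pathTo z (bnd n)) n (fun i => bnd n - n i) (deg_pathTo_bnd z n)).choose_spec.1
  exact ⟨⟨_, h, hc⟩, hd⟩

theorem deg_segOf (z : G.DiagSeq) (n : Fin k → ℕ) : G.deg (segOf z n) = n :=
  (segOf_spec z n).2

/-- `segOf z n` is an initial segment of every long enough diagonal path. -/
theorem segOf_factor (z : G.DiagSeq) (n : Fin k → ℕ) (m : ℕ) (hm : ∀ i, n i ≤ m) :
    ∃ (ν : G.E) (h : G.s (segOf z n) = G.r ν),
      G.comp (segOf z n) ν h = pathTo z m := by
  obtain ⟨⟨ν, h, hc⟩, -⟩ := segOf_spec z n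
  have hbm : bnd n ≤ m := Finset.sup_le fun i _ => hm i
  obtain ⟨ρ, hρ, hcρ⟩ := pathTo_add z (bnd n) (m - bnd n)
  rw [Nat.add_sub_cancel' hbm] at hcρ
  have hνρ : G.s ν = G.r ρ := by
    have := G.s_comp _ _ h; rw [hc] at this; rw [this] at hρ; exact hρ
  refine ⟨G.comp ν ρ hνρ, by rw [G.r_comp]; exact h, ?_⟩
  rw [← G.comp_assoc _ _ _ h hνρ (by rw [hc]; exact hρ)]
  rw [← hcρ]
  exact comp_congr hc rfl _ _

/-- Any degree-`n` initial segment of a long enough diagonal path equals `segOf z n`. -/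
theorem segOf_eq (z : G.DiagSeq) (n : Fin k → ℕ) (m : ℕ) (hm : ∀ i, n i ≤ m)
    {μ ν : G.E} (h : G.s μ = G.r ν) (hc : G.comp μ ν h = pathTo z m)
    (hd : G.deg μ = n) : μ = segOf z n := by
  obtain ⟨ν', h', hc'⟩ := segOf_factor z n m hm
  exact (comp_cancel h h' (by rw [hd, deg_segOf]) (hc.trans hc'.symm)).1

theorem segOf_const (z : G.DiagSeq) (m : ℕ) : segOf z (fun _ => m) = pathTo z m := by
  symm
  refine segOf_eq z _ m (fun i => le_refl m) (h := (G.r_vId _).symm)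
    (G.comp_id _ _) (deg_pathTo z m)

noncomputable def bwd (z : G.DiagSeq) : G.InfPath where
  seg n := segOf z n
  deg_seg n := deg_segOf z n
  compat n m := by
    set M := bnd (n + m) with hM
    have hnm : ∀ i, (n + m) i ≤ M := le_bnd (n + m)
    obtain ⟨ν, h, hc⟩ := segOf_factor z (n + m) M hnm
    obtain ⟨⟨a, b⟩, ⟨hab, habc, hda, hdb⟩, -⟩ :=
      G.factor (segOf z (n + m)) n m (by rw [deg_segOf])
    have hbν : G.s b = G.r ν := by
      have := G.s_comp _ _ hab; rw [habc] at this; rw [this] at h; exact h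
    have hfac : G.comp a (G.comp b ν hbν) (by rw [G.r_comp]; exact hab)
        = pathTo z M := by
      rw [← G.comp_assoc _ _ _ hab hbν (by rw [habc]; exact h)]
      rw [← hc]
      exact comp_congr habc rfl _ _
    have ha : a = segOf z n :=
      segOf_eq z n M (fun i => le_trans (Nat.le_add_right _ _) (hnm i)) _ hfac hda
    have hsb : G.s (segOf z n) = G.r b := ha ▸ hab
    refine ⟨b, hsb, ?_⟩
    show G.comp (segOf z n) b hsb = segOf z (n + m)
    rw [← habc]
    exact comp_congr ha.symm rfl _ _

theorem InfPath.ext' {x y : G.InfPath} (h : ∀ n, x.seg n = y.seg n) : x = y := by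
  cases x; cases y
  simp only [InfPath.mk.injEq]
  exact funext h

theorem DiagSeq.ext' {x y : G.DiagSeq} (h : ∀ n, x.edge n = y.edge n) : x = y := by
  cases x; cases y
  simp only [DiagSeq.mk.injEq]
  exact funext h

theorem pathTo_fwd (x : G.InfPath) (m : ℕ) :
    pathTo (fwd x) m = x.seg (fun _ => m) := by
  induction m with
  | zero =>
    have h0 : G.deg (x.seg (fun _ => 0)) = 0 := x.deg_seg _
    have hv : x.seg (fun _ => 0) = G.vId (G.r (x.seg (fun _ => 0))) :=
      eq_vId_of_deg_zero h0
    obtain ⟨h, -⟩ := fwd_spec x 0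
    show G.vId (G.r ((fwd x).edge 0)) = x.seg (fun _ => 0)
    rw [← h, hv, G.s_vId]
  | succ m ih =>
    obtain ⟨h, hc⟩ := fwd_spec x m
    rw [pathTo_succ, ← hc]
    exact comp_congr ih rfl _ _

theorem bwd_fwd (x : G.InfPath) : bwd (fwd x) = x := by
  refine InfPath.ext' fun n => ?_
  show segOf (fwd x) n = x.seg n
  symm
  obtain ⟨μ, hμ, hc⟩ := x.compat n (fun i => bnd n - n i)
  have hkey : (n + fun i => bnd n - n i) = fun _ => bnd n := by
    funext i; exact Nat.add_sub_cancel' (le_bnd n i)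
  refine segOf_eq (fwd x) n (bnd n) (le_bnd n) hμ ?_ (x.deg_seg n)
  rw [hc, hkey, pathTo_fwd]

theorem fwd_bwd (z : G.DiagSeq) : fwd (bwd z) = z := by
  refine DiagSeq.ext' fun n => ?_
  obtain ⟨h, hc⟩ := fwd_spec (bwd z) n
  have h1 : (bwd z).seg (fun _ => n) = pathTo z n := segOf_const z n
  have h2 : (bwd z).seg (fun _ => n + 1) = pathTo z (n + 1) := segOf_const z (n + 1)
  have hs : G.s (pathTo z n) = G.r ((fwd (bwd z)).edge n) := by rw [← h1]; exact h
  have hc2 : G.comp (pathTo z n) ((fwd (bwd z)).edge n) hs = pathTo z (n + 1) := by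
    rw [← h2, ← hc]; exact comp_congr h1.symm rfl _ _
  have := comp_cancel hs (pathTo_s z n)
    rfl (hc2.trans (pathTo_succ z n))
  exact this.2

theorem pathTo_congr {z z' : G.DiagSeq} (m : ℕ)
    (h : ∀ i ≤ m, z.edge i = z'.edge i) : pathTo z m = pathTo z' m := by
  induction m with
  | zero => show G.vId (G.r (z.edge 0)) = G.vId (G.r (z'.edge 0)); rw [h 0 le_rfl]
  | succ m ih =>
    rw [pathTo_succ, pathTo_succ]
    exact comp_congr (ih fun i hi => h i (Nat.le_succ_of_le hi))
      (h m (Nat.le_succ m)) _ _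

theorem segOf_congr {z z' : G.DiagSeq} (n : Fin k → ℕ) (m : ℕ) (hm : ∀ i, n i ≤ m)
    (h : ∀ i ≤ m, z.edge i = z'.edge i) : segOf z n = segOf z' n := by
  obtain ⟨ν, hν, hc⟩ := segOf_factor z n m hm
  refine segOf_eq z' n m hm hν ?_ (deg_segOf z n)
  rw [hc]; exact pathTo_congr m h

end KGraph


open KGraph

/-- For a row-finite `k`-graph `Λ` with no sources, the map
`i : Λ^∞ → E^∞` to the infinite path space of the diagonal `1`-graph, determined by
`α(i(x)(j,l)) = x(jp, lp)` — i.e. `x(0,np) · i(x)ₙ = x(0,(n+1)p)` where `p = (1,…,1)` —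
is a bijection, and `i⁻¹` is continuous for the cylinder-set topologies. -/
theorem stmt13 {k : ℕ} (G : KGraph k) (hrf : G.RowFinite) (hns : G.NoSources) :
    ∃ i : G.InfPath ≃ G.DiagSeq,
      (∀ (x : G.InfPath) (n : ℕ),
        ∃ h : G.s (x.seg (fun _ => n)) = G.r ((i x).edge n),
          G.comp (x.seg (fun _ => n)) ((i x).edge n) h = x.seg (fun _ => n + 1)) ∧
      @Continuous _ _ G.diagTop G.infPathTop i.symm := by
  refine ⟨⟨fwd, bwd, bwd_fwd, fwd_bwd⟩, fun x n => fwd_spec x n, ?_⟩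
  show @Continuous _ _ G.diagTop G.infPathTop bwd
  letI : TopologicalSpace G.DiagSeq := G.diagTop
  letI : TopologicalSpace G.InfPath := G.infPathTop
  rw [show G.infPathTop = TopologicalSpace.generateFrom
    {S | ∃ l : G.E, S = {x : G.InfPath | x.seg (G.deg l) = l}} from rfl,
    continuous_generateFrom_iff]
  rintro S ⟨l, rfl⟩
  have hset : bwd ⁻¹' {x : G.InfPath | x.seg (G.deg l) = l}
      = ⋃ z₀ ∈ {z : G.DiagSeq | segOf z (G.deg l) = l},
          {z : G.DiagSeq | ∀ i < bnd (G.deg l) + 1, z.edge i = z₀.edge i} := by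
    ext z
    simp only [Set.mem_preimage, Set.mem_setOf_eq, Set.mem_iUnion, exists_prop]
    constructor
    · intro hz
      exact ⟨z, hz, fun i _ => rfl⟩
    · rintro ⟨z₀, hz₀, hag⟩
      show segOf z (G.deg l) = l
      rw [segOf_congr (G.deg l) (bnd (G.deg l)) (fun i => le_bnd _ i)
        (fun i hi => hag i (Nat.lt_succ_of_le hi))]
      exact hz₀
  rw [hset]
  refine isOpen_biUnion fun z₀ _ => ?_
  exact TopologicalSpace.GenerateOpen.basic _ ⟨bnd (G.deg l) + 1, z₀.edge, rfl⟩
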